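/- Let q be odd and n ≥ 1. Then Σ_{k=0}^{n} B(n,k) · ∏_{j=1}^{n} (q + 2n + 1 - 2k - 2j) = q^n · 2^n · n!, where B(n,k) is the number of signed permutations in B_n with exactly k type-B descents. -/

import Mathlib

/-- A signed permutation in `B_n`. -/
abbrev SignedPerm (n : ℕ) := Equiv.Perm (Fin n) × (Fin n → Bool)

/-- The value `w(i) ∈ {±1, ..., ±n}` of the signed permutation at
(`1`-indexed) position `i+1`. -/
def signedVal (n : ℕ) (w : SignedPerm n) (i : Fin n) : ℤ :=
  if w.2 i then -((w.1 i : ℤ) + 1) else (w.1 i : ℤ) + 1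

/-- Rank of a value in the linear order `Λ`:
`+1 < +2 < ... < +n < n+1 < -n < ... < -2 < -1`. -/
def lamRank (n : ℕ) (a : ℤ) : ℤ := if 0 < a then a else 2 * n + 2 + a

/-- The value at position `i+1`, with the convention `w(n+1) = n+1`. -/
def nextVal (n : ℕ) (w : SignedPerm n) (i : Fin n) : ℤ :=
  if h : (i : ℕ) + 1 < n then signedVal n w ⟨(i : ℕ) + 1, h⟩ else ((n : ℤ) + 1)

/-- The number of type-`B` descents of `w`. -/
def bDescents (n : ℕ) (w : SignedPerm n) : ℕ :=
  (Finset.univ.filter (fun i : Fin n =>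
    lamRank n (signedVal n w i) < lamRank n (nextVal n w i))).card

/-- The type-`B` Eulerian number `B(n,k)`: the number of signed permutations
with exactly `k` type-`B` descents. -/
def bEulerianNumber (n k : ℕ) : ℕ :=
  ((Finset.univ : Finset (SignedPerm n)).filter
    (fun w => bDescents n w = k)).card

namespace Worpitzky

variable {n t : ℕ}

/-- ascent at position i -/
def asc (n : ℕ) (w : SignedPerm n) (i : Fin n) : Prop :=
  lamRank n (signedVal n w i) < lamRank n (nextVal n w i)

instance (w : SignedPerm n) : DecidablePred (asc n w) := fun i =>
  inferInstanceAs (Decidable (_ < _))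

lemma bDescents_eq (n : ℕ) (w : SignedPerm n) :
    bDescents n w = (Finset.univ.filter (asc n w)).card := by
  rfl

/-- integer rank of a value: positives odd, nonpositives even -/
def rk (a : ℤ) : ℤ := if 0 < a then 2 * a - 1 else -(2 * a)

/-- sorting key -/
def key (n : ℕ) (f : Fin n → ℤ) (j : Fin n) : ℤ ×ₗ ℤ :=
  toLex (-(rk (f j)), if 0 < f j then -(j : ℤ) else (j : ℤ))

def SignCond (w : SignedPerm n) (g : Fin n → ℤ) : Prop :=
  ∀ i : Fin n, (0 < g i ↔ w.2 i = false)

def RkChain (w : SignedPerm n) (g : Fin n → ℤ) : Prop :=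
  ∀ (i : Fin n) (h : (i : ℕ) + 1 < n),
    rk (g ⟨(i : ℕ) + 1, h⟩) + (if asc n w i then 1 else 0) ≤ rk (g i)

def Compat (w : SignedPerm n) (f : Fin n → ℤ) : Prop :=
  SignCond w (f ∘ w.1) ∧ RkChain w (f ∘ w.1)

instance (w : SignedPerm n) (g : Fin n → ℤ) : Decidable (SignCond w g) := by
  unfold SignCond; infer_instance

instance (w : SignedPerm n) (g : Fin n → ℤ) : Decidable (RkChain w g) := by
  unfold RkChain; infer_instance

instance (w : SignedPerm n) (f : Fin n → ℤ) : Decidable (Compat w f) := by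
  unfold Compat; infer_instance

noncomputable def cube (n t : ℕ) : Finset (Fin n → ℤ) :=
  Fintype.piFinset fun _ => Finset.Icc (-(t : ℤ)) (t : ℤ)

lemma card_cube : (cube n t).card = (2 * t + 1) ^ n := by
  rw [cube, Fintype.card_piFinset]
  have : (Finset.Icc (-(t : ℤ)) (t : ℤ)).card = 2 * t + 1 := by
    rw [Int.card_Icc]; omega
  simp [this]

lemma asc_iff_internal (w : SignedPerm n) (i : ℕ) (h1 : i < n) (h2 : i + 1 < n) :
    asc n w ⟨i, h1⟩ ↔
      ((w.2 ⟨i, h1⟩ = false ∧ w.2 ⟨i + 1, h2⟩ = false ∧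
          (w.1 ⟨i, h1⟩ : ℕ) < (w.1 ⟨i + 1, h2⟩ : ℕ)) ∨
        (w.2 ⟨i, h1⟩ = false ∧ w.2 ⟨i + 1, h2⟩ = true) ∨
        (w.2 ⟨i, h1⟩ = true ∧ w.2 ⟨i + 1, h2⟩ = true ∧
          (w.1 ⟨i + 1, h2⟩ : ℕ) < (w.1 ⟨i, h1⟩ : ℕ))) := by
  have hx : ((w.1 ⟨i, h1⟩ : ℕ) : ℤ) + 1 > 0 := by positivity
  have hy : ((w.1 ⟨i + 1, h2⟩ : ℕ) : ℤ) + 1 > 0 := by positivity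
  have hxn : (w.1 ⟨i, h1⟩ : ℕ) < n := (w.1 ⟨i, h1⟩).isLt
  have hyn : (w.1 ⟨i + 1, h2⟩ : ℕ) < n := (w.1 ⟨i + 1, h2⟩).isLt
  unfold asc nextVal signedVal lamRank
  rw [dif_pos h2]
  cases hb1 : w.2 ⟨i, h1⟩ <;> cases hb2 : w.2 ⟨i + 1, h2⟩ <;>
    simp only [if_true, if_false, Bool.true_eq_false, Bool.false_eq_true,
      false_and, true_and, and_false, and_true, or_false, false_or] <;>
    split_ifs <;> (try simp only [iff_true, iff_false, not_lt]) <;> omega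

lemma asc_iff_last (w : SignedPerm n) (i : ℕ) (h1 : i < n) (h2 : ¬ (i + 1 < n)) :
    asc n w ⟨i, h1⟩ ↔ w.2 ⟨i, h1⟩ = false := by
  have hx : ((w.1 ⟨i, h1⟩ : ℕ) : ℤ) + 1 > 0 := by positivity
  have hxn : (w.1 ⟨i, h1⟩ : ℕ) < n := (w.1 ⟨i, h1⟩).isLt
  unfold asc nextVal signedVal lamRank
  rw [dif_neg h2]
  cases hb1 : w.2 ⟨i, h1⟩ <;>
    simp only [if_true, if_false, Bool.true_eq_false, Bool.false_eq_true] <;>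
    split_ifs <;> (try simp only [iff_true, iff_false, not_lt]) <;> omega

lemma key_lt_iff (f : Fin n → ℤ) (x y : Fin n) :
    key n f x < key n f y ↔
      (-(rk (f x)) < -(rk (f y)) ∨ (-(rk (f x)) = -(rk (f y)) ∧
        (if 0 < f x then -(x : ℤ) else (x : ℤ)) < (if 0 < f y then -(y : ℤ) else (y : ℤ)))) :=
  Prod.Lex.lt_iff

lemma key_injective (f : Fin n → ℤ) : Function.Injective (key n f) := by
  intro x y h
  unfold key at h
  rw [toLex_inj, Prod.mk.injEq] at h
  obtain ⟨h1, h2⟩ := h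
  have hx := x.isLt; have hy := y.isLt
  unfold rk at h1
  apply Fin.ext
  split_ifs at h1 h2 <;> omega

lemma chain_iff_key (w : SignedPerm n) (f : Fin n → ℤ) (hs : SignCond w (f ∘ w.1))
    (i : ℕ) (h1 : i < n) (h2 : i + 1 < n) :
    (rk (f (w.1 ⟨i + 1, h2⟩)) + (if asc n w ⟨i, h1⟩ then 1 else 0) ≤ rk (f (w.1 ⟨i, h1⟩)))
      ↔ key n f (w.1 ⟨i, h1⟩) < key n f (w.1 ⟨i + 1, h2⟩) := by
  have hne : (w.1 ⟨i, h1⟩ : ℕ) ≠ (w.1 ⟨i + 1, h2⟩ : ℕ) := by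
    intro h
    have := w.1.injective (Fin.ext h)
    have := congrArg Fin.val this
    simp at this
  have hxn : (w.1 ⟨i, h1⟩ : ℕ) < n := (w.1 ⟨i, h1⟩).isLt
  have hyn : (w.1 ⟨i + 1, h2⟩ : ℕ) < n := (w.1 ⟨i + 1, h2⟩).isLt
  have hs1 := hs ⟨i, h1⟩
  have hs2 := hs ⟨i + 1, h2⟩
  simp only [Function.comp_apply] at hs1 hs2
  rw [key_lt_iff]
  unfold rk
  by_cases ha : asc n w ⟨i, h1⟩ <;>
    [rw [if_pos ha]; rw [if_neg ha]] <;>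
    rw [asc_iff_internal w i h1 h2] at ha <;>
    cases hb1 : w.2 ⟨i, h1⟩ <;> cases hb2 : w.2 ⟨i + 1, h2⟩ <;>
    (try simp only [hb1, hb2, Bool.true_eq_false, Bool.false_eq_true, iff_true, iff_false,
      false_and, true_and, and_false, and_true, or_false, false_or, or_self, not_or,
      not_and, not_lt, not_false_iff, not_true] at hs1) <;>
    (try simp only [hb1, hb2, Bool.true_eq_false, Bool.false_eq_true, iff_true, iff_false,
      false_and, true_and, and_false, and_true, or_false, false_or, or_self, not_or,
      not_and, not_lt, not_false_iff, not_true] at hs2) <;>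
    (try simp only [hb1, hb2, Bool.true_eq_false, Bool.false_eq_true, iff_true, iff_false,
      false_and, true_and, and_false, and_true, or_false, false_or, or_self, not_or,
      not_and, not_lt, not_false_iff, not_true] at ha) <;>
    split_ifs <;> omega

lemma strictMono_of_adj {α : Type*} [Preorder α] {g : Fin n → α}
    (hadj : ∀ (i : ℕ) (h : i + 1 < n), g ⟨i, Nat.lt_of_succ_lt h⟩ < g ⟨i + 1, h⟩) :
    StrictMono g := by
  have H : ∀ d (a b : Fin n), (b : ℕ) = (a : ℕ) + d + 1 → g a < g b := by
    intro d
    induction d with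
    | zero =>
      intro a b hd
      have hb2 : b = ⟨(a : ℕ) + 1, hd ▸ b.isLt⟩ := Fin.ext (by simp only [Fin.val_mk]; omega)
      rw [hb2]
      exact hadj a (hd ▸ b.isLt)
    | succ d ih =>
      intro a b hd
      have hb' : (a : ℕ) + d + 1 < n := by have := b.isLt; omega
      have h1 := ih a ⟨(a : ℕ) + d + 1, hb'⟩ rfl
      have hb2 : b = ⟨(a : ℕ) + d + 2, hd ▸ b.isLt⟩ := Fin.ext (by simp only [Fin.val_mk]; omega)
      rw [hb2]
      exact h1.trans (hadj ((a : ℕ) + d + 1) (by have := b.isLt; omega))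
  intro a b hab
  rw [Fin.lt_def] at hab
  exact H ((b : ℕ) - (a : ℕ) - 1) a b (by omega)

lemma compat_iff (w : SignedPerm n) (f : Fin n → ℤ) :
    Compat w f ↔ SignCond w (f ∘ w.1) ∧ StrictMono (key n f ∘ w.1) := by
  constructor
  · rintro ⟨hs, hc⟩
    refine ⟨hs, strictMono_of_adj ?_⟩
    intro i h
    exact (chain_iff_key w f hs i (Nat.lt_of_succ_lt h) h).mp (hc ⟨i, Nat.lt_of_succ_lt h⟩ h)
  · rintro ⟨hs, hm⟩
    refine ⟨hs, fun i h => ?_⟩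
    have hlt : (⟨(i : ℕ), i.isLt⟩ : Fin n) < ⟨(i : ℕ) + 1, h⟩ := by
      rw [Fin.lt_def]; exact Nat.lt_succ_self _
    exact (chain_iff_key w f hs i i.isLt h).mpr (hm hlt)

def wOf (n : ℕ) (f : Fin n → ℤ) : SignedPerm n :=
  (Tuple.sort (key n f), fun i => decide (f (Tuple.sort (key n f) i) ≤ 0))

lemma compat_wOf (f : Fin n → ℤ) : Compat (wOf n f) f := by
  rw [compat_iff]
  constructor
  · intro i
    simp [wOf, decide_eq_false_iff_not, not_le]
  · have hmono := Tuple.monotone_sort (key n f)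
    exact hmono.strictMono_of_injective ((key_injective f).comp (Equiv.injective _))

lemma compat_unique {f : Fin n → ℤ} {w : SignedPerm n} (h : Compat w f) : w = wOf n f := by
  rw [compat_iff] at h
  obtain ⟨hs, hm⟩ := h
  have h1 : key n f ∘ w.1 = key n f ∘ (Tuple.sort (key n f)) :=
    Tuple.unique_monotone hm.monotone (Tuple.monotone_sort _)
  have hperm : w.1 = Tuple.sort (key n f) :=
    Equiv.ext fun j => key_injective f (congrFun h1 j)
  have hsign : w.2 = (wOf n f).2 := by
    funext i
    have hi := hs i
    simp only [Function.comp_apply] at hi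
    show w.2 i = decide (f (Tuple.sort (key n f) i) ≤ 0)
    rw [← hperm]
    cases hb : w.2 i
    · rw [hb] at hi
      simp only [eq_self_iff_true, iff_true] at hi
      exact (decide_eq_false (not_le.mpr hi)).symm
    · rw [hb] at hi
      simp only [Bool.true_eq_false, iff_false, not_lt] at hi
      exact (decide_eq_true hi).symm
  exact Prod.ext hperm hsign

lemma existsUnique_compat (f : Fin n → ℤ) : ∃! w : SignedPerm n, Compat w f :=
  ⟨wOf n f, compat_wOf f, fun _ h => compat_unique h⟩

lemma sum_card_compat (n t : ℕ) :
    ∑ w : SignedPerm n, ((cube n t).filter (fun f => Compat w f)).card = (2 * t + 1) ^ n := by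
  have h : ∀ f : Fin n → ℤ,
      ((Finset.univ : Finset (SignedPerm n)).filter (fun w => Compat w f)).card = 1 := by
    intro f
    obtain ⟨w₀, h₀, hu⟩ := existsUnique_compat f
    rw [Finset.card_eq_one]
    refine ⟨w₀, ?_⟩
    ext w
    simp only [Finset.mem_filter, Finset.mem_univ, true_and, Finset.mem_singleton]
    exact ⟨fun hw => (compat_unique hw).trans (compat_unique h₀).symm, fun hw => hw ▸ h₀⟩
  calc ∑ w : SignedPerm n, ((cube n t).filter (fun f => Compat w f)).card
      = ∑ w : SignedPerm n, ∑ f ∈ cube n t, if Compat w f then 1 else 0 :=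
        Finset.sum_congr rfl fun w _ => Finset.card_filter _ _
    _ = ∑ f ∈ cube n t, ∑ w : SignedPerm n, if Compat w f then 1 else 0 := Finset.sum_comm
    _ = ∑ f ∈ cube n t, 1 := by
        refine Finset.sum_congr rfl fun f _ => ?_
        rw [← Finset.card_filter]
        exact h f
    _ = (2 * t + 1) ^ n := by
        rw [Finset.sum_const, smul_eq_mul, mul_one, card_cube]

lemma asc_iff_internal' (w : SignedPerm n) (i : Fin n) (h2 : (i : ℕ) + 1 < n) :
    asc n w i ↔
      ((w.2 i = false ∧ w.2 ⟨(i : ℕ) + 1, h2⟩ = false ∧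
          (w.1 i : ℕ) < (w.1 ⟨(i : ℕ) + 1, h2⟩ : ℕ)) ∨
        (w.2 i = false ∧ w.2 ⟨(i : ℕ) + 1, h2⟩ = true) ∨
        (w.2 i = true ∧ w.2 ⟨(i : ℕ) + 1, h2⟩ = true ∧
          (w.1 ⟨(i : ℕ) + 1, h2⟩ : ℕ) < (w.1 i : ℕ))) := by
  have h := asc_iff_internal w (i : ℕ) i.isLt h2
  simpa [Fin.eta] using h

lemma asc_iff_last' (w : SignedPerm n) (i : Fin n) (h2 : ¬ ((i : ℕ) + 1 < n)) :
    asc n w i ↔ w.2 i = false := by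
  have h := asc_iff_last w (i : ℕ) i.isLt h2
  simpa [Fin.eta] using h

noncomputable def gset (n t : ℕ) (w : SignedPerm n) : Finset (Fin n → ℤ) :=
  (cube n t).filter (fun g => SignCond w g ∧ RkChain w g)

lemma card_class_eq_gset (w : SignedPerm n) :
    ((cube n t).filter (fun f => Compat w f)).card = (gset n t w).card := by
  apply Finset.card_nbij' (fun f => f ∘ w.1) (fun g => g ∘ w.1.symm)
  · intro f hf
    rw [Finset.mem_coe, Finset.mem_filter] at hf
    obtain ⟨hf1, hf2⟩ := hf
    rw [Finset.mem_coe, gset, Finset.mem_filter]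
    refine ⟨?_, hf2⟩
    rw [cube, Fintype.mem_piFinset] at hf1 ⊢
    exact fun i => hf1 _
  · intro g hg
    rw [Finset.mem_coe, gset, Finset.mem_filter] at hg
    obtain ⟨hg1, hg2⟩ := hg
    rw [Finset.mem_coe, Finset.mem_filter]
    constructor
    · rw [cube, Fintype.mem_piFinset] at hg1 ⊢
      exact fun i => hg1 _
    · show Compat w (g ∘ w.1.symm)
      unfold Compat
      have hcomp : (g ∘ (w.1.symm : Fin n → Fin n)) ∘ (w.1 : Fin n → Fin n) = g := by
        funext i; simp
      rw [hcomp]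
      exact hg2
  · intro f _; funext i; simp
  · intro g _; funext i; simp

def ascIdx (n : ℕ) (w : SignedPerm n) (i : ℕ) : ℕ :=
  if h : i < n then (if asc n w ⟨i, h⟩ then 1 else 0) else 0

lemma ascIdx_eq (w : SignedPerm n) (i : Fin n) :
    ascIdx n w (i : ℕ) = if asc n w i then 1 else 0 := by
  simp [ascIdx, i.isLt]

lemma ascIdx_le_one (w : SignedPerm n) (i : ℕ) : ascIdx n w i ≤ 1 := by
  unfold ascIdx; split_ifs <;> omega

def csum (n : ℕ) (w : SignedPerm n) (i : ℕ) : ℕ := ∑ j ∈ Finset.Ico i n, ascIdx n w j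

lemma csum_eq_zero (w : SignedPerm n) {i : ℕ} (h : n ≤ i) : csum n w i = 0 := by
  unfold csum
  rw [Finset.Ico_eq_empty (by omega), Finset.sum_empty]

lemma csum_succ (w : SignedPerm n) {i : ℕ} (h : i < n) :
    csum n w i = ascIdx n w i + csum n w (i + 1) := by
  unfold csum
  rw [Finset.sum_eq_sum_Ico_succ_bot h]

lemma csum_zero_eq (w : SignedPerm n) : csum n w 0 = bDescents n w := by
  rw [bDescents_eq, Finset.card_filter]
  unfold csum
  rw [← Finset.range_eq_Ico, ← Fin.sum_univ_eq_sum_range (fun j => ascIdx n w j)]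
  exact Finset.sum_congr rfl fun i _ => ascIdx_eq w i

lemma csum_le_csum_zero (w : SignedPerm n) (i : ℕ) : csum n w i ≤ csum n w 0 :=
  Finset.sum_le_sum_of_subset (Finset.Ico_subset_Ico (by omega) le_rfl)

lemma csum_zero_le (w : SignedPerm n) (i : ℕ) : csum n w 0 ≤ i + csum n w i := by
  induction i with
  | zero => omega
  | succ i ih =>
    have h : csum n w i ≤ 1 + csum n w (i + 1) := by
      by_cases hi : i < n
      · have := csum_succ w hi
        have := ascIdx_le_one w i
        omega
      · rw [csum_eq_zero w (by omega), csum_eq_zero w (by omega)]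
        omega
    omega

def MCond (n : ℕ) (w : SignedPerm n) (m : Fin n → ℕ) : Prop :=
  ∀ i : Fin n,
    (if h : (i : ℕ) + 1 < n then m ⟨(i : ℕ) + 1, h⟩ else 0) + ascIdx n w (i : ℕ) ≤ m i

instance (w : SignedPerm n) (m : Fin n → ℕ) : Decidable (MCond n w m) := by
  unfold MCond; infer_instance

def mset (n t : ℕ) (w : SignedPerm n) : Finset (Fin n → ℕ) :=
  (Fintype.piFinset fun _ : Fin n => Finset.range (t + 1)).filter (MCond n w)

lemma one_le_of_MCond {w : SignedPerm n} {m : Fin n → ℕ} (hm : MCond n w m) :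
    ∀ i : Fin n, w.2 i = false → 1 ≤ m i := by
  suffices H : ∀ d (i : Fin n), n - (i : ℕ) ≤ d → w.2 i = false → 1 ≤ m i by
    intro i hb; exact H n i (by omega) hb
  intro d
  induction d with
  | zero => intro i h; exact absurd h (by have := i.isLt; omega)
  | succ d ih =>
    intro i hle hb
    have hmi := hm i
    by_cases h2 : (i : ℕ) + 1 < n
    · rw [dif_pos h2] at hmi
      by_cases ha : asc n w i
      · rw [ascIdx_eq, if_pos ha] at hmi
        omega
      · have hb2 : w.2 ⟨(i : ℕ) + 1, h2⟩ = false := by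
          rw [asc_iff_internal' w i h2] at ha
          cases hval : w.2 ⟨(i : ℕ) + 1, h2⟩
          · rfl
          · exact absurd (Or.inr (Or.inl ⟨hb, hval⟩)) ha
        have h1 := ih ⟨(i : ℕ) + 1, h2⟩ (by simp only [Fin.val_mk]; omega) hb2
        omega
    · have ha : asc n w i := (asc_iff_last' w i h2).mpr hb
      rw [ascIdx_eq, if_pos ha] at hmi
      omega

lemma signprop_of (w : SignedPerm n) {g : Fin n → ℤ} (hs : SignCond w g) (i : Fin n) :
    (w.2 i = false ∧ 0 < g i) ∨ (w.2 i = true ∧ g i ≤ 0) := by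
  have h := hs i
  cases hb : w.2 i
  · rw [hb] at h; simp only [eq_self_iff_true, iff_true] at h; exact Or.inl ⟨rfl, h⟩
  · rw [hb] at h; simp only [Bool.true_eq_false, iff_false, not_lt] at h; exact Or.inr ⟨rfl, h⟩

lemma card_gset_eq_mset (w : SignedPerm n) :
    (gset n t w).card = (mset n t w).card := by
  apply Finset.card_nbij' (fun g i => (g i).natAbs)
    (fun m i => if w.2 i then -(m i : ℤ) else (m i : ℤ))
  · intro g hg
    rw [Finset.mem_coe, gset, Finset.mem_filter] at hg
    obtain ⟨hc, hs, hr⟩ := hg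
    rw [cube, Fintype.mem_piFinset] at hc
    rw [Finset.mem_coe, mset, Finset.mem_filter]
    constructor
    · rw [Fintype.mem_piFinset]
      intro i
      have hci := hc i
      rw [Finset.mem_Icc] at hci
      rw [Finset.mem_range]
      beta_reduce
      omega
    · intro i
      beta_reduce
      by_cases h2 : (i : ℕ) + 1 < n
      · rw [dif_pos h2]
        have hch := hr i h2
        have hp1 := signprop_of w hs i
        have hp2 := signprop_of w hs ⟨(i : ℕ) + 1, h2⟩
        rw [ascIdx_eq]
        by_cases ha : asc n w i
        · rw [if_pos ha] at hch ⊢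
          rw [asc_iff_internal' w i h2] at ha
          unfold rk at hch
          rcases hp1 with ⟨hb1, hv1⟩ | ⟨hb1, hv1⟩ <;>
            rcases hp2 with ⟨hb2, hv2⟩ | ⟨hb2, hv2⟩ <;>
            (try simp only [hb1, hb2, Bool.false_eq_true, Bool.true_eq_false, false_and, true_and, and_false, and_true,
              or_false, false_or, true_or, or_true, or_self, not_or, not_and, not_lt,
              eq_self_iff_true, iff_true, iff_false, not_false_iff, not_true] at ha) <;>
            split_ifs at hch <;> omega
        · rw [if_neg ha] at hch ⊢
          unfold rk at hch
          split_ifs at hch <;> omega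
      · rw [dif_neg h2]
        rw [ascIdx_eq]
        by_cases ha : asc n w i
        · rw [if_pos ha]
          have hb := (asc_iff_last' w i h2).mp ha
          have hsi := hs i
          rw [hb] at hsi
          simp only [eq_self_iff_true, iff_true] at hsi
          omega
        · rw [if_neg ha]; omega
  · intro m hm
    rw [Finset.mem_coe, mset, Finset.mem_filter] at hm
    obtain ⟨hp, hmc⟩ := hm
    rw [Fintype.mem_piFinset] at hp
    have hone := one_le_of_MCond hmc
    have hrange : ∀ i : Fin n, m i < t + 1 := by
      intro i; have := hp i; rwa [Finset.mem_range] at this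
    rw [Finset.mem_coe, gset, Finset.mem_filter]
    refine ⟨?_, ?_, ?_⟩
    · rw [cube, Fintype.mem_piFinset]
      intro i
      have := hrange i
      rw [Finset.mem_Icc]
      beta_reduce
      split_ifs <;> constructor <;> omega
    · intro i
      cases hb : w.2 i
      · have h1 := hone i hb
        simp only [hb, Bool.false_eq_true, if_false, eq_self_iff_true, iff_true]
        omega
      · simp only [hb, if_true, Bool.true_eq_false, iff_false, not_lt]
        omega
    · intro i h2
      have hch := hmc i
      rw [dif_pos h2, ascIdx_eq] at hch
      have hq1 : w.2 i = true ∨ 1 ≤ m i := by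
        cases hb : w.2 i
        · exact Or.inr (hone i hb)
        · exact Or.inl rfl
      have hq2 : w.2 ⟨(i : ℕ) + 1, h2⟩ = true ∨ 1 ≤ m ⟨(i : ℕ) + 1, h2⟩ := by
        cases hb : w.2 ⟨(i : ℕ) + 1, h2⟩
        · exact Or.inr (hone _ hb)
        · exact Or.inl rfl
      by_cases ha : asc n w i <;>
        [rw [if_pos ha] at hch ⊢; rw [if_neg ha] at hch ⊢] <;>
        rw [asc_iff_internal' w i h2] at ha <;>
        cases hb1 : w.2 i <;> cases hb2 : w.2 ⟨(i : ℕ) + 1, h2⟩ <;>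
        (try simp only [hb1, hb2, Bool.false_eq_true, Bool.true_eq_false, false_and, true_and, and_false, and_true,
              or_false, false_or, true_or, or_true, or_self, not_or, not_and, not_lt,
              eq_self_iff_true, iff_true, iff_false, not_false_iff, not_true] at ha) <;>
        (try simp only [hb1, hb2, Bool.false_eq_true, Bool.true_eq_false, false_and, true_and, and_false, and_true,
              or_false, false_or, true_or, or_true, or_self, not_or, not_and, not_lt,
              eq_self_iff_true, iff_true, iff_false, not_false_iff, not_true] at hq1) <;>
        (try simp only [hb1, hb2, Bool.false_eq_true, Bool.true_eq_false, false_and, true_and, and_false, and_true,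
              or_false, false_or, true_or, or_true, or_self, not_or, not_and, not_lt,
              eq_self_iff_true, iff_true, iff_false, not_false_iff, not_true] at hq2) <;>
        simp only [hb1, hb2, Bool.false_eq_true, Bool.true_eq_false, if_true, if_false] <;>
        unfold rk <;> split_ifs <;> omega
  · intro g hg
    rw [Finset.mem_coe, gset, Finset.mem_filter] at hg
    obtain ⟨_, hs, _⟩ := hg
    funext i
    show (if w.2 i then -(((g i).natAbs : ℤ)) else ((g i).natAbs : ℤ)) = g i
    rcases signprop_of w hs i with ⟨hb, hv⟩ | ⟨hb, hv⟩ <;>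
      simp only [hb, Bool.false_eq_true, Bool.true_eq_false, if_true, if_false] <;> omega
  · intro m _
    funext i
    show (if w.2 i then -((m i : ℤ)) else ((m i : ℤ))).natAbs = m i
    cases hb : w.2 i <;>
      simp only [hb, Bool.false_eq_true, Bool.true_eq_false, if_true, if_false] <;> omega

lemma csum_le_of_MCond {w : SignedPerm n} {m : Fin n → ℕ} (hm : MCond n w m) :
    ∀ i : Fin n, csum n w (i : ℕ) ≤ m i := by
  suffices H : ∀ d (i : Fin n), n - (i : ℕ) ≤ d → csum n w (i : ℕ) ≤ m i by
    intro i; exact H n i (by omega)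
  intro d
  induction d with
  | zero => intro i h; have := i.isLt; omega
  | succ d ih =>
    intro i hle
    have hmi := hm i
    rw [csum_succ w i.isLt]
    by_cases h2 : (i : ℕ) + 1 < n
    · rw [dif_pos h2] at hmi
      have hih := ih ⟨(i : ℕ) + 1, h2⟩ (by simp only [Fin.val_mk]; omega)
      simp only [Fin.val_mk] at hih
      omega
    · rw [dif_neg h2] at hmi
      rw [csum_eq_zero w (by omega)]
      omega

def vset (n N : ℕ) : Finset (Fin n → ℕ) :=
  (Fintype.piFinset fun _ : Fin n => Finset.range N).filter
    (fun v => ∀ (i : Fin n) (h : (i : ℕ) + 1 < n), v ⟨(i : ℕ) + 1, h⟩ < v i)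

lemma vset_chain {v : Fin n → ℕ}
    (hv : ∀ (i : Fin n) (h : (i : ℕ) + 1 < n), v ⟨(i : ℕ) + 1, h⟩ < v i) :
    ∀ (i j : Fin n), (i : ℕ) ≤ (j : ℕ) → v j + ((j : ℕ) - (i : ℕ)) ≤ v i := by
  suffices H : ∀ d (i j : Fin n), (j : ℕ) = (i : ℕ) + d → v j + d ≤ v i by
    intro i j hij
    have := H ((j : ℕ) - (i : ℕ)) i j (by omega)
    omega
  intro d
  induction d with
  | zero =>
    intro i j h
    have hji : j = i := Fin.ext (by omega)
    subst hji
    omega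
  | succ d ih =>
    intro i j hj
    have hmid : (i : ℕ) + d < n := by have := j.isLt; omega
    have h1 := ih i ⟨(i : ℕ) + d, hmid⟩ rfl
    have hmid2 : ((⟨(i : ℕ) + d, hmid⟩ : Fin n) : ℕ) + 1 < n := by
      simp only [Fin.val_mk]; have := j.isLt; omega
    have h2 := hv ⟨(i : ℕ) + d, hmid⟩ hmid2
    simp only [Fin.val_mk] at h2
    have hji : j = ⟨(i : ℕ) + d + 1, by have := j.isLt; omega⟩ :=
      Fin.ext (by simp only [Fin.val_mk]; omega)
    rw [hji]
    omega

lemma card_mset_eq_vset (w : SignedPerm n) :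
    (mset n t w).card = (vset n (t + n - bDescents n w)).card := by
  have hkc : csum n w 0 = bDescents n w := csum_zero_eq w
  refine Finset.card_nbij'
    (fun m i => m i + (n - 1 - (i : ℕ)) - csum n w (i : ℕ))
    (fun v i => v i + csum n w (i : ℕ) - (n - 1 - (i : ℕ))) ?_ ?_ ?_ ?_
  · intro m hm
    rw [Finset.mem_coe, mset, Finset.mem_filter] at hm
    obtain ⟨hp, hmc⟩ := hm
    rw [Fintype.mem_piFinset] at hp
    have hcle := csum_le_of_MCond hmc
    have hr : ∀ i : Fin n, m i < t + 1 := fun i => Finset.mem_range.mp (hp i)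
    rw [Finset.mem_coe, vset, Finset.mem_filter]
    constructor
    · rw [Fintype.mem_piFinset]
      intro i
      rw [Finset.mem_range]
      beta_reduce
      have h1 := hr i
      have h2 := hcle i
      have h3 := csum_zero_le w (i : ℕ)
      have h4 := i.isLt
      omega
    · intro i h2
      beta_reduce
      have hm1 := hmc i
      rw [dif_pos h2] at hm1
      have hs1 := csum_succ w i.isLt
      have hc1 := hcle i
      have hc2 := hcle ⟨(i : ℕ) + 1, h2⟩
      simp only [Fin.val_mk] at hc2 ⊢
      omega
  · intro v hv
    rw [Finset.mem_coe, vset, Finset.mem_filter] at hv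
    obtain ⟨hp, hvc⟩ := hv
    rw [Fintype.mem_piFinset] at hp
    have hr : ∀ i : Fin n, v i < t + n - bDescents n w := fun i =>
      Finset.mem_range.mp (hp i)
    have hch := vset_chain hvc
    have hlast : ∀ i : Fin n, (n : ℕ) - 1 - (i : ℕ) ≤ v i := by
      intro i
      have hl := hch i ⟨n - 1, by have := i.isLt; omega⟩
        (by simp only [Fin.val_mk]; have := i.isLt; omega)
      simp only [Fin.val_mk] at hl
      omega
    rw [Finset.mem_coe, mset, Finset.mem_filter]
    constructor
    · rw [Fintype.mem_piFinset]
      intro i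
      rw [Finset.mem_range]
      beta_reduce
      have hn0 : 0 < n := by have := i.isLt; omega
      have h0 := hch ⟨0, hn0⟩ i (by simp only [Fin.val_mk]; omega)
      simp only [Fin.val_mk] at h0
      have hr0 := hr ⟨0, hn0⟩
      have h2 := hlast i
      have hcz := csum_le_csum_zero w (i : ℕ)
      have h4 := i.isLt
      omega
    · intro i
      beta_reduce
      by_cases h2 : (i : ℕ) + 1 < n
      · rw [dif_pos h2]
        have hv1 := hvc i h2
        have hs1 := csum_succ w i.isLt
        have ha1 := ascIdx_le_one w (i : ℕ)
        have hl1 := hlast i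
        have hl2 := hlast ⟨(i : ℕ) + 1, h2⟩
        simp only [Fin.val_mk] at hl2 ⊢
        omega
      · rw [dif_neg h2]
        have hs1 := csum_succ w i.isLt
        have hz : csum n w ((i : ℕ) + 1) = 0 := csum_eq_zero w (by omega)
        have hl1 := hlast i
        have ha1 := ascIdx_le_one w (i : ℕ)
        have h4 := i.isLt
        omega
  · intro m hm
    rw [Finset.mem_coe, mset, Finset.mem_filter] at hm
    obtain ⟨hp, hmc⟩ := hm
    have hcle := csum_le_of_MCond hmc
    funext i
    beta_reduce
    have h1 := hcle i
    have h2 := i.isLt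
    omega
  · intro v hv
    rw [Finset.mem_coe, vset, Finset.mem_filter] at hv
    obtain ⟨hp, hvc⟩ := hv
    have hch := vset_chain hvc
    funext i
    beta_reduce
    have hlast : v i + ((n - 1 : ℕ) - (i : ℕ)) ≤ v ⟨n - 1, by have := i.isLt; omega⟩ →
      True := fun _ => trivial
    have hl := hch i ⟨n - 1, by have := i.isLt; omega⟩ (by simp only [Fin.val_mk]; have := i.isLt; omega)
    simp only [Fin.val_mk] at hl
    omega

lemma vset_injective {v : Fin n → ℕ}
    (hvc : ∀ (i : Fin n) (h : (i : ℕ) + 1 < n), v ⟨(i : ℕ) + 1, h⟩ < v i) :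
    Function.Injective v := by
  have hch := vset_chain hvc
  intro a b hab
  by_contra hne
  have hne' : (a : ℕ) ≠ (b : ℕ) := fun h => hne (Fin.ext h)
  rcases Nat.lt_or_ge (a : ℕ) (b : ℕ) with h | h
  · have := hch a b (by omega)
    omega
  · have := hch b a (by omega)
    omega

lemma card_vset (N : ℕ) : (vset n N).card = N.choose n := by
  have hpc : (Finset.powersetCard n (Finset.range N)).card = N.choose n := by
    rw [Finset.card_powersetCard, Finset.card_range]
  rw [← hpc]
  refine Finset.card_nbij' (fun v => Finset.image v Finset.univ)
    (fun S i => if h : S.card = n then S.orderEmbOfFin h (Fin.rev i) else 0) ?_ ?_ ?_ ?_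
  · intro v hv
    rw [Finset.mem_coe, vset, Finset.mem_filter] at hv
    obtain ⟨hp, hvc⟩ := hv
    rw [Fintype.mem_piFinset] at hp
    rw [Finset.mem_coe, Finset.mem_powersetCard]
    constructor
    · intro x hx
      rw [Finset.mem_image] at hx
      obtain ⟨i, _, rfl⟩ := hx
      exact hp i
    · rw [Finset.card_image_of_injective _ (vset_injective hvc), Finset.card_univ,
        Fintype.card_fin]
  · intro S hS
    rw [Finset.mem_coe, Finset.mem_powersetCard] at hS
    obtain ⟨hsub, hcard⟩ := hS
    rw [Finset.mem_coe, vset, Finset.mem_filter]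
    constructor
    · rw [Fintype.mem_piFinset]
      intro i
      beta_reduce
      rw [dif_pos hcard]
      exact hsub (Finset.orderEmbOfFin_mem S hcard (Fin.rev i))
    · intro i h2
      beta_reduce
      simp only [dif_pos hcard]
      apply (S.orderEmbOfFin hcard).strictMono
      rw [Fin.lt_def]
      rw [Fin.val_rev, Fin.val_rev]
      simp only [Fin.val_mk]
      omega
  · intro v hv
    rw [Finset.mem_coe, vset, Finset.mem_filter] at hv
    obtain ⟨hp, hvc⟩ := hv
    have hcard : (Finset.image v Finset.univ).card = n := by
      rw [Finset.card_image_of_injective _ (vset_injective hvc), Finset.card_univ,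
        Fintype.card_fin]
    funext i
    beta_reduce
    rw [dif_pos hcard]
    have huniq : (fun j : Fin n => v (Fin.rev j)) =
        ⇑((Finset.image v Finset.univ).orderEmbOfFin hcard) := by
      apply Finset.orderEmbOfFin_unique
      · intro x
        exact Finset.mem_image_of_mem v (Finset.mem_univ _)
      · intro a b hab
        show v (Fin.rev a) < v (Fin.rev b)
        have hch := vset_chain hvc
        have hr : (Fin.rev b : ℕ) < (Fin.rev a : ℕ) := by
          rw [Fin.val_rev, Fin.val_rev]
          rw [Fin.lt_def] at hab
          have := b.isLt
          omega
        have := hch (Fin.rev b) (Fin.rev a) (by omega)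
        omega
    rw [← huniq]
    beta_reduce
    rw [Fin.rev_rev]
  · intro S hS
    rw [Finset.mem_coe, Finset.mem_powersetCard] at hS
    obtain ⟨hsub, hcard⟩ := hS
    ext x
    simp only [Finset.mem_image, Finset.mem_univ, true_and, dif_pos hcard]
    constructor
    · rintro ⟨i, rfl⟩
      exact Finset.orderEmbOfFin_mem S hcard _
    · intro hx
      have hrange := Finset.range_orderEmbOfFin S hcard
      have : x ∈ Set.range (S.orderEmbOfFin hcard) := by
        rw [hrange]; exact hx
      obtain ⟨j, hj⟩ := this
      exact ⟨Fin.rev j, by rw [Fin.rev_rev]; exact hj⟩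

lemma card_compat_class (w : SignedPerm n) :
    ((cube n t).filter (fun f => Compat w f)).card = (t + n - bDescents n w).choose n := by
  rw [card_class_eq_gset, card_gset_eq_mset, card_mset_eq_vset, card_vset]

lemma bDescents_le (w : SignedPerm n) : bDescents n w ≤ n := by
  rw [bDescents_eq]
  calc (Finset.univ.filter (asc n w)).card
      ≤ (Finset.univ : Finset (Fin n)).card := Finset.card_filter_le _ _
    _ = n := by rw [Finset.card_univ, Fintype.card_fin]

lemma main_count (n t : ℕ) :
    ∑ k ∈ Finset.range (n + 1), bEulerianNumber n k * (t + n - k).choose n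
      = (2 * t + 1) ^ n := by
  calc ∑ k ∈ Finset.range (n + 1), bEulerianNumber n k * (t + n - k).choose n
      = ∑ k ∈ Finset.range (n + 1),
          ∑ w ∈ Finset.univ.filter (fun w : SignedPerm n => bDescents n w = k),
            (t + n - bDescents n w).choose n := by
        refine Finset.sum_congr rfl fun k _ => ?_
        rw [Finset.sum_congr rfl (fun w hw => by
          rw [(Finset.mem_filter.mp hw).2] : ∀ w ∈ _, (t + n - bDescents n w).choose n
            = (t + n - k).choose n)]
        rw [Finset.sum_const, smul_eq_mul, bEulerianNumber]
    _ = ∑ w : SignedPerm n, (t + n - bDescents n w).choose n :=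
        Finset.sum_fiberwise_of_maps_to
          (fun w _ => Finset.mem_range.mpr (Nat.lt_succ_of_le (bDescents_le w))) _
    _ = ∑ w : SignedPerm n, ((cube n t).filter (fun f => Compat w f)).card :=
        Finset.sum_congr rfl fun w _ => (card_compat_class w).symm
    _ = (2 * t + 1) ^ n := sum_card_compat n t

lemma prod_cast_sub (a N : ℕ) :
    ∏ j ∈ Finset.range N, ((a : ℤ) - (j : ℤ)) = (a.descFactorial N : ℤ) := by
  induction N with
  | zero => simp
  | succ N ih =>
    rw [Finset.prod_range_succ, ih, Nat.descFactorial_succ]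
    rcases Nat.lt_or_ge a N with h | h
    · have h0 : a.descFactorial N = 0 := Nat.descFactorial_eq_zero_iff_lt.mpr h
      simp [h0]
    · have hc : ((a - N : ℕ) : ℤ) = (a : ℤ) - (N : ℤ) := by omega
      rw [Nat.cast_mul, hc]
      ring

end Worpitzky

/-- The type-`B` Worpitzky-type identity: for odd `q` and `n ≥ 1`,
`∑_{k=0}^{n} B(n,k)·∏_{j=1}^{n}(q+2n+1-2k-2j) = q^n·2^n·n!`. -/
theorem worpitzky_typeB (n q : ℕ) (hn : 1 ≤ n) (hq : Odd q) :
    ∑ k ∈ Finset.range (n + 1), (bEulerianNumber n k : ℤ) *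
        ∏ j ∈ Finset.range n, ((q : ℤ) + 2 * n + 1 - 2 * k - 2 * ((j : ℤ) + 1)) =
      (q : ℤ) ^ n * 2 ^ n * (Nat.factorial n) := by
  obtain ⟨t, ht⟩ := hq
  subst ht
  have hprod : ∀ k : ℕ, k ≤ n →
      ∏ j ∈ Finset.range n, (((2 * t + 1 : ℕ) : ℤ) + 2 * n + 1 - 2 * k - 2 * ((j : ℤ) + 1))
        = 2 ^ n * (((t + n - k).descFactorial n : ℕ) : ℤ) := by
    intro k hk
    have h1 : ∀ j ∈ Finset.range n,
        (((2 * t + 1 : ℕ) : ℤ) + 2 * n + 1 - 2 * k - 2 * ((j : ℤ) + 1))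
          = 2 * (((t + n - k : ℕ) : ℤ) - (j : ℤ)) := by
      intro j _
      omega
    rw [Finset.prod_congr rfl h1, Finset.prod_mul_distrib, Finset.prod_const,
      Finset.card_range, Worpitzky.prod_cast_sub]
  have hnat : ∑ k ∈ Finset.range (n + 1), bEulerianNumber n k * ((t + n - k).descFactorial n)
      = (2 * t + 1) ^ n * n.factorial := by
    calc ∑ k ∈ Finset.range (n + 1), bEulerianNumber n k * ((t + n - k).descFactorial n)
        = ∑ k ∈ Finset.range (n + 1),
            (bEulerianNumber n k * ((t + n - k).choose n)) * n.factorial := by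
          refine Finset.sum_congr rfl fun k _ => ?_
          rw [Nat.descFactorial_eq_factorial_mul_choose]
          ring
      _ = (∑ k ∈ Finset.range (n + 1), bEulerianNumber n k * ((t + n - k).choose n))
            * n.factorial := (Finset.sum_mul _ _ _).symm
      _ = (2 * t + 1) ^ n * n.factorial := by rw [Worpitzky.main_count]
  calc ∑ k ∈ Finset.range (n + 1), (bEulerianNumber n k : ℤ) *
        ∏ j ∈ Finset.range n, (((2 * t + 1 : ℕ) : ℤ) + 2 * n + 1 - 2 * k - 2 * ((j : ℤ) + 1))
      = ∑ k ∈ Finset.range (n + 1),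
          (2 : ℤ) ^ n * ((bEulerianNumber n k * ((t + n - k).descFactorial n) : ℕ) : ℤ) := by
        refine Finset.sum_congr rfl fun k hk => ?_
        rw [hprod k (by rw [Finset.mem_range] at hk; omega)]
        push_cast
        ring
    _ = (2 : ℤ) ^ n *
          ((∑ k ∈ Finset.range (n + 1),
            bEulerianNumber n k * ((t + n - k).descFactorial n) : ℕ) : ℤ) := by
        rw [← Finset.mul_sum, Nat.cast_sum]
    _ = (2 : ℤ) ^ n * (((2 * t + 1) ^ n * n.factorial : ℕ) : ℤ) := by rw [hnat]
    _ = ((2 * t + 1 : ℕ) : ℤ) ^ n * 2 ^ n * (Nat.factorial n) := by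
        push_cast
        ring
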